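/- arXiv:1609.00804 — 2 statements merged into one kernel-verified Lean document; each statement's English description precedes it below -/
import Mathlib

section
/- Let J be a real square matrix (not necessarily symmetric) of block form [[A, C],[D, E]] with A, E square, and let H be the symmetric matrix [[aI, Rᵀ],[R, dI]] where R = (Cᵀ + D)/2 (as appropriate), a ≤ λ_min((A+Aᵀ)/2), d ≤ λ_min((E+Eᵀ)/2). If H is positive definite then J is positive definite in the sense that tᵀ J t > 0 for all nonzero t. -/
open Matrix

private lemma quad_lower_bound {k : ℕ} {S : Matrix (Fin k) (Fin k) ℝ}
    (hS : S.IsHermitian) {a : ℝ} (h : ∀ i, a ≤ hS.eigenvalues i)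
    (x : Fin k → ℝ) : a * (x ⬝ᵥ x) ≤ x ⬝ᵥ (S *ᵥ x) := by
  have hd : (Matrix.diagonal (fun i => hS.eigenvalues i - a)).PosSemidef :=
    Matrix.posSemidef_diagonal_iff.mpr (fun i => sub_nonneg.mpr (h i))
  have hps : (S - a • 1).PosSemidef := by
    have h2 := hd.mul_mul_conjTranspose_same (hS.eigenvectorUnitary : Matrix (Fin k) (Fin k) ℝ)
    have hu : (hS.eigenvectorUnitary : Matrix (Fin k) (Fin k) ℝ)
        * star (hS.eigenvectorUnitary : Matrix (Fin k) (Fin k) ℝ) = 1 :=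
      (Matrix.mem_unitaryGroup_iff).mp hS.eigenvectorUnitary.2
    have hrw : (hS.eigenvectorUnitary : Matrix (Fin k) (Fin k) ℝ)
        * Matrix.diagonal (fun i => hS.eigenvalues i - a)
        * (hS.eigenvectorUnitary : Matrix (Fin k) (Fin k) ℝ)ᴴ = S - a • 1 := by
      have hdiag : Matrix.diagonal (fun i => hS.eigenvalues i - a)
          = Matrix.diagonal hS.eigenvalues - a • 1 := by
        rw [Matrix.smul_one_eq_diagonal, ← Matrix.diagonal_sub]
      rw [hdiag, Matrix.mul_sub, Matrix.sub_mul, Matrix.mul_smul, Matrix.smul_mul,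
        Matrix.mul_one]
      congr 1
      · conv_rhs => rw [hS.spectral_theorem]
        congr 1
      · rw [Matrix.star_eq_conjTranspose] at hu; rw [hu]
    rwa [hrw] at h2
  have h0 := hps.dotProduct_mulVec_nonneg x
  simp only [RCLike.re_to_real, star_trivial] at h0
  rw [Matrix.sub_mulVec, dotProduct_sub, Matrix.smul_mulVec,
    Matrix.one_mulVec, dotProduct_smul, smul_eq_mul] at h0
  linarith

/-- Let `J = [[A, C],[D, E]]` and `H = [[aI, Rᵀ],[R, dI]]` with
`R = (Cᵀ + D)/2`, `a ≤ λ_min((A+Aᵀ)/2)` and `d ≤ λ_min((E+Eᵀ)/2)`.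
If `H` is positive definite then `tᵀ J t > 0` for all nonzero `t`. -/
theorem posDef_of_bounding_matrix {m n : ℕ} [NeZero m] [NeZero n]
    (A : Matrix (Fin m) (Fin m) ℝ) (C : Matrix (Fin m) (Fin n) ℝ)
    (D : Matrix (Fin n) (Fin m) ℝ) (E : Matrix (Fin n) (Fin n) ℝ)
    (a d : ℝ)
    (hA : (((1 : ℝ) / 2) • (A + Aᵀ)).IsHermitian)
    (hE : (((1 : ℝ) / 2) • (E + Eᵀ)).IsHermitian)
    (ha : a ≤ Finset.univ.inf' Finset.univ_nonempty hA.eigenvalues)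
    (hd : d ≤ Finset.univ.inf' Finset.univ_nonempty hE.eigenvalues)
    (hH : (Matrix.fromBlocks (a • 1) (((1 : ℝ) / 2) • (Cᵀ + D))ᵀ
            (((1 : ℝ) / 2) • (Cᵀ + D)) (d • 1)).PosDef) :
    ∀ t : Fin m ⊕ Fin n → ℝ, t ≠ 0 →
      0 < t ⬝ᵥ (Matrix.fromBlocks A C D E *ᵥ t) := by
  intro t ht
  set x : Fin m → ℝ := t ∘ Sum.inl with hx
  set y : Fin n → ℝ := t ∘ Sum.inr with hy
  have htxy : t = Sum.elim x y := by funext i; cases i <;> rfl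
  set R : Matrix (Fin n) (Fin m) ℝ := ((1 : ℝ) / 2) • (Cᵀ + D) with hR
  -- positivity of the H quadratic form
  have hHpos : 0 < t ⬝ᵥ ((Matrix.fromBlocks (a • 1) Rᵀ R (d • 1)) *ᵥ t) := by
    have := hH.dotProduct_mulVec_pos ht
    simpa using this
  -- bounds on the A and E parts
  have hax : ∀ i, a ≤ hA.eigenvalues i := fun i =>
    le_trans ha (Finset.inf'_le _ (Finset.mem_univ i))
  have hdy : ∀ i, d ≤ hE.eigenvalues i := fun i =>
    le_trans hd (Finset.inf'_le _ (Finset.mem_univ i))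
  have hAx := quad_lower_bound hA hax x
  have hEy := quad_lower_bound hE hdy y
  have hAsym : x ⬝ᵥ ((((1 : ℝ) / 2) • (A + Aᵀ)) *ᵥ x) = x ⬝ᵥ (A *ᵥ x) := by
    rw [Matrix.smul_mulVec, dotProduct_smul, Matrix.add_mulVec,
      dotProduct_add]
    have : x ⬝ᵥ (Aᵀ *ᵥ x) = x ⬝ᵥ (A *ᵥ x) := by
      rw [Matrix.dotProduct_mulVec, Matrix.vecMul_transpose, dotProduct_comm]
    rw [this, smul_eq_mul]; ring
  have hEsym : y ⬝ᵥ ((((1 : ℝ) / 2) • (E + Eᵀ)) *ᵥ y) = y ⬝ᵥ (E *ᵥ y) := by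
    rw [Matrix.smul_mulVec, dotProduct_smul, Matrix.add_mulVec,
      dotProduct_add]
    have : y ⬝ᵥ (Eᵀ *ᵥ y) = y ⬝ᵥ (E *ᵥ y) := by
      rw [Matrix.dotProduct_mulVec, Matrix.vecMul_transpose, dotProduct_comm]
    rw [this, smul_eq_mul]; ring
  rw [hAsym] at hAx
  rw [hEsym] at hEy
  -- expand both quadratic forms
  have hJexp : t ⬝ᵥ (Matrix.fromBlocks A C D E *ᵥ t)
      = x ⬝ᵥ (A *ᵥ x) + x ⬝ᵥ (C *ᵥ y) + (y ⬝ᵥ (D *ᵥ x) + y ⬝ᵥ (E *ᵥ y)) := by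
    rw [htxy, Matrix.fromBlocks_mulVec, sumElim_dotProduct_sumElim,
      dotProduct_add, dotProduct_add]
    simp [Sum.elim_comp_inl, Sum.elim_comp_inr]
  have hHexp : t ⬝ᵥ ((Matrix.fromBlocks (a • 1) Rᵀ R (d • 1)) *ᵥ t)
      = a * (x ⬝ᵥ x) + x ⬝ᵥ (Rᵀ *ᵥ y) + (y ⬝ᵥ (R *ᵥ x) + d * (y ⬝ᵥ y)) := by
    rw [htxy, Matrix.fromBlocks_mulVec, sumElim_dotProduct_sumElim,
      dotProduct_add, dotProduct_add]
    simp only [Sum.elim_comp_inl, Sum.elim_comp_inr, Matrix.smul_mulVec,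
      Matrix.one_mulVec, dotProduct_smul, smul_eq_mul]
  have hcross : x ⬝ᵥ (Rᵀ *ᵥ y) + y ⬝ᵥ (R *ᵥ x)
      = x ⬝ᵥ (C *ᵥ y) + y ⬝ᵥ (D *ᵥ x) := by
    have h1 : x ⬝ᵥ (Rᵀ *ᵥ y) = y ⬝ᵥ (R *ᵥ x) := by
      rw [Matrix.dotProduct_mulVec, Matrix.vecMul_transpose, dotProduct_comm]
    have h2 : y ⬝ᵥ (Cᵀ *ᵥ x) = x ⬝ᵥ (C *ᵥ y) := by
      rw [Matrix.dotProduct_mulVec, Matrix.vecMul_transpose, dotProduct_comm]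
    rw [h1, hR, Matrix.smul_mulVec, dotProduct_smul, Matrix.add_mulVec,
      dotProduct_add, h2, smul_eq_mul]
    ring
  rw [hHexp] at hHpos
  rw [hJexp]
  linarith
end

section
/- The function h(μ, σ) = (σ/√(2π)) exp(−μ²/(2σ²)) + (μ/2)(1 − erf(−μ/(√2 σ))), for μ ∈ ℝ and σ > 0, viewed as a function of (μ, σ²), satisfies ∂h/∂(σ²) = (1/(2√(2π) σ)) exp(−μ²/(2σ²)). -/
open Real

noncomputable def erf (x : ℝ) : ℝ :=
  (2 / Real.sqrt π) * ∫ t in (0 : ℝ)..x, Real.exp (-t ^ 2)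

noncomputable def h (μ σ : ℝ) : ℝ :=
  σ / Real.sqrt (2 * π) * Real.exp (-(μ ^ 2) / (2 * σ ^ 2)) +
    μ / 2 * (1 - erf (-(μ / (Real.sqrt 2 * σ))))

lemma hasDerivAt_erf (x : ℝ) :
    HasDerivAt erf (2 / Real.sqrt π * Real.exp (-x ^ 2)) x := by
  have := ((Continuous.integral_hasStrictDerivAt
    (by continuity : Continuous fun t : ℝ => Real.exp (-t ^ 2)) 0 x).hasDerivAt).const_mul
    (2 / Real.sqrt π)
  exact this

lemma hasDerivAt_h_sigma (μ σ : ℝ) (hσ : 0 < σ) :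
    HasDerivAt (fun s : ℝ => h μ s)
      (1 / Real.sqrt (2 * π) * Real.exp (-(μ ^ 2) / (2 * σ ^ 2))) σ := by
  have hσ' : σ ≠ 0 := hσ.ne'
  set E : ℝ := -(μ ^ 2) / (2 * σ ^ 2) with hE
  -- derivative of inner exponential argument
  have h1 : HasDerivAt (fun s : ℝ => -(μ ^ 2) / (2 * s ^ 2)) (μ ^ 2 / σ ^ 3) σ := by
    have hp : HasDerivAt (fun s : ℝ => s ^ 2) (2 * σ) σ := by
      simpa using hasDerivAt_pow 2 σ
    have := ((hp.inv (pow_ne_zero 2 hσ')).const_mul (-(μ ^ 2) / 2))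
    refine HasDerivAt.congr_deriv (this.congr_of_eventuallyEq ?_) ?_
    · filter_upwards with s; field_simp; simp [div_eq_mul_inv]
    · field_simp
  have hexp : HasDerivAt (fun s : ℝ => Real.exp (-(μ ^ 2) / (2 * s ^ 2)))
      (Real.exp E * (μ ^ 2 / σ ^ 3)) σ := h1.exp
  -- term 1
  have hT1 : HasDerivAt (fun s : ℝ => s / Real.sqrt (2 * π) * Real.exp (-(μ ^ 2) / (2 * s ^ 2)))
      (1 / Real.sqrt (2 * π) * (Real.exp E + σ * (Real.exp E * (μ ^ 2 / σ ^ 3)))) σ := by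
    have := ((hasDerivAt_id σ).mul hexp).const_mul (1 / Real.sqrt (2 * π))
    refine HasDerivAt.congr_deriv (this.congr_of_eventuallyEq ?_) ?_
    · filter_upwards with s; simp only [Pi.mul_apply, id_eq]; ring
    · simp only [hE, id_eq, one_mul]
  -- inner function of erf
  have hu : HasDerivAt (fun s : ℝ => -(μ / (Real.sqrt 2 * s))) (μ / (Real.sqrt 2 * σ ^ 2)) σ := by
    have := (((hasDerivAt_id σ).inv hσ').const_mul (-μ / Real.sqrt 2))
    refine HasDerivAt.congr_deriv (this.congr_of_eventuallyEq ?_) ?_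
    · filter_upwards with s
      have : Real.sqrt 2 ≠ 0 := by positivity
      field_simp; simp [div_eq_mul_inv]
    · have : Real.sqrt 2 ≠ 0 := by positivity
      field_simp; simp only [id_eq]; field_simp
  have hsq : (-(μ / (Real.sqrt 2 * σ))) ^ 2 = μ ^ 2 / (2 * σ ^ 2) := by
    rw [neg_pow, div_pow, mul_pow, Real.sq_sqrt (by norm_num : (2:ℝ) ≥ 0)]
    ring
  have hT2 : HasDerivAt (fun s : ℝ => μ / 2 * (1 - erf (-(μ / (Real.sqrt 2 * s)))))
      (μ / 2 * (-(2 / Real.sqrt π * Real.exp (-(μ ^ 2) / (2 * σ ^ 2)) *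
        (μ / (Real.sqrt 2 * σ ^ 2))))) σ := by
    have hc : HasDerivAt (fun s : ℝ => erf (-(μ / (Real.sqrt 2 * s))))
        (2 / Real.sqrt π * Real.exp (-(μ ^ 2) / (2 * σ ^ 2)) * (μ / (Real.sqrt 2 * σ ^ 2))) σ := by
      have := (hasDerivAt_erf (-(μ / (Real.sqrt 2 * σ)))).comp σ hu
      simpa [hsq, neg_div, Function.comp_def] using this
    exact (((hasDerivAt_const σ (1:ℝ)).sub hc).const_mul (μ / 2)).congr_deriv (by ring)
  have := hT1.add hT2
  refine this.congr_deriv ?_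
  have h2π : Real.sqrt (2 * π) = Real.sqrt 2 * Real.sqrt π := Real.sqrt_mul (by norm_num) π
  have hπ : Real.sqrt π ≠ 0 := by positivity
  have h2 : Real.sqrt 2 ≠ 0 := by positivity
  have hs2 : Real.sqrt 2 * Real.sqrt 2 = 2 := Real.mul_self_sqrt (by norm_num)
  rw [h2π, hE]
  field_simp
  ring_nf

/-- Viewing `h` as a function of the variance `v = σ²`, its derivative with
respect to the variance is `(1/(2√(2π) σ)) exp(-μ²/(2σ²))`. -/
theorem hasDerivAt_h_variance (μ σ : ℝ) (hσ : 0 < σ) :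
    HasDerivAt (fun v : ℝ => h μ (Real.sqrt v))
      (1 / (2 * Real.sqrt (2 * π) * σ) * Real.exp (-(μ ^ 2) / (2 * σ ^ 2)))
      (σ ^ 2) := by
  have hσ' : σ ≠ 0 := hσ.ne'
  have hs : Real.sqrt (σ ^ 2) = σ := Real.sqrt_sq hσ.le
  have hsqrt : HasDerivAt Real.sqrt (1 / (2 * σ)) (σ ^ 2) := by
    have := Real.hasDerivAt_sqrt (by positivity : (σ:ℝ) ^ 2 ≠ 0)
    simpa [hs] using this
  have hg := hasDerivAt_h_sigma μ σ hσ
  rw [← hs] at hg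
  have := hg.comp (σ ^ 2) hsqrt
  refine this.congr_deriv ?_
  rw [hs]
  field_simp
end
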